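/- (Proposition 1) Let N_A, N_B ≥ 2 and let ψ : Matrix (Fin N_A) (Fin N_B) ℂ be a normalized pure state, i.e. ‖ψ‖_HS = 1, with associated pure-state density matrix ρ_ψ((m,μ),(n,ν)) = ψ(m,μ) · conj(ψ(n,ν)). Then ‖RM(ρ_ψ)‖_tr ≥ 1, and equality ‖RM(ρ_ψ)‖_tr = 1 holds if and only if ψ has rank 1, i.e. there exist vectors a ∈ (Fin N_A → ℂ) and b ∈ (Fin N_B → ℂ) with ψ(m,μ) = a(m)·b(μ) for all m, μ (equivalently, the pure state ρ_ψ is separable). -/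

import Mathlib

open Matrix Kronecker Complex ComplexOrder

noncomputable def traceNorm {m n : Type*} [Fintype m] [Fintype n] [DecidableEq n]
    (M : Matrix m n ℂ) : ℝ :=
  ((((Matrix.posSemidef_conjTranspose_mul_self M).1.eigenvectorUnitary : Matrix n n ℂ) *
      diagonal (((↑) : ℝ → ℂ) ∘ Real.sqrt ∘ (Matrix.posSemidef_conjTranspose_mul_self M).1.eigenvalues) *
      (star ((Matrix.posSemidef_conjTranspose_mul_self M).1.eigenvectorUnitary : Matrix n n ℂ)))).trace.re

def realign {NA NB : ℕ} (ρ : Matrix (Fin NA × Fin NB) (Fin NA × Fin NB) ℂ) :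
    Matrix (Fin NA × Fin NA) (Fin NB × Fin NB) ℂ :=
  fun p q => ρ (p.1, q.1) (p.2, q.2)

def IsDensityMatrix {n : Type*} [Fintype n] (ρ : Matrix n n ℂ) : Prop :=
  ρ.PosSemidef ∧ ρ.trace = 1

noncomputable def hsNorm {m n : Type*} [Fintype m] [Fintype n] (M : Matrix m n ℂ) : ℝ :=
  Real.sqrt (∑ i, ∑ j, ‖M i j‖ ^ 2)

noncomputable def hsInner {m n : Type*} [Fintype m] [Fintype n] (X Y : Matrix m n ℂ) : ℂ :=
  (Xᴴ * Y).trace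

noncomputable def marginalA {NA NB : ℕ} (ρ : Matrix (Fin NA × Fin NB) (Fin NA × Fin NB) ℂ) :
    Matrix (Fin NA) (Fin NA) ℂ :=
  fun m n => ∑ μ, ρ (m, μ) (n, μ)

noncomputable def marginalB {NA NB : ℕ} (ρ : Matrix (Fin NA × Fin NB) (Fin NA × Fin NB) ℂ) :
    Matrix (Fin NB) (Fin NB) ℂ :=
  fun μ ν => ∑ m, ρ (m, μ) (m, ν)

def SeparableState {NA NB : ℕ} (ρ : Matrix (Fin NA × Fin NB) (Fin NA × Fin NB) ℂ) : Prop :=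
  ∃ (ι : Type) (s : Finset ι) (p : ι → ℝ)
    (ρA : ι → Matrix (Fin NA) (Fin NA) ℂ) (ρB : ι → Matrix (Fin NB) (Fin NB) ℂ),
    (∀ i ∈ s, 0 < p i) ∧ (∑ i ∈ s, p i = 1) ∧
    (∀ i ∈ s, IsDensityMatrix (ρA i)) ∧ (∀ i ∈ s, IsDensityMatrix (ρB i)) ∧
    ρ = ∑ i ∈ s, (p i : ℂ) • (ρA i ⊗ₖ ρB i)

noncomputable def l2OpNorm {n : Type*} [Fintype n] [DecidableEq n] (M : Matrix n n ℂ) : ℝ :=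
  ‖Matrix.toEuclideanCLM (𝕜 := ℂ) (n := n) M‖

section SqrtAux
open scoped MatrixOrder

variable {n : Type*} [Fintype n] [DecidableEq n]

noncomputable def Matrix.PosSemidef.sqrt {A : Matrix n n ℂ} (hA : A.PosSemidef) : Matrix n n ℂ :=
  (hA.1.eigenvectorUnitary : Matrix n n ℂ) *
    diagonal (((↑) : ℝ → ℂ) ∘ Real.sqrt ∘ hA.1.eigenvalues) *
    (star (hA.1.eigenvectorUnitary : Matrix n n ℂ))

lemma Matrix.PosSemidef.sqrt_eq_cfc {A : Matrix n n ℂ} (hA : A.PosSemidef) :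
    hA.sqrt = CFC.sqrt A := by
  rw [CFC.sqrt_eq_real_sqrt A hA.nonneg, cfcₙ_eq_cfc, hA.1.cfc_eq, IsHermitian.cfc,
    Unitary.conjStarAlgAut_apply]
  rfl

lemma Matrix.PosSemidef.posSemidef_sqrt {A : Matrix n n ℂ} (hA : A.PosSemidef) :
    hA.sqrt.PosSemidef := by
  rw [hA.sqrt_eq_cfc, ← nonneg_iff_posSemidef]
  exact CFC.sqrt_nonneg A

lemma Matrix.PosSemidef.sqrt_mul_self {A : Matrix n n ℂ} (hA : A.PosSemidef) :
    hA.sqrt * hA.sqrt = A := by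
  rw [hA.sqrt_eq_cfc]
  exact CFC.sqrt_mul_sqrt_self A hA.nonneg

lemma Matrix.PosSemidef.eq_sqrt_of_sq_eq {A B : Matrix n n ℂ} (hB : B.PosSemidef)
    (hA : A.PosSemidef) (h : B ^ 2 = A) : B = hA.sqrt := by
  rw [hA.sqrt_eq_cfc]
  exact (CFC.sqrt_unique (by rw [← sq]; exact h) hB.nonneg).symm

end SqrtAux
namespace RealignAux

variable {n m : Type*} [Fintype n] [Fintype m] [DecidableEq n] [DecidableEq m]

lemma kron_conjTranspose {p q : Type*} (A : Matrix n p ℂ) (B : Matrix m q ℂ) :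
    (A ⊗ₖ B)ᴴ = Aᴴ ⊗ₖ Bᴴ := by
  ext ⟨i, j⟩ ⟨k, l⟩
  simp [conjTranspose_apply, star_mul']

lemma map_star_mul (A B : Matrix n n ℂ) :
    (A.map (starRingEnd ℂ)) * (B.map (starRingEnd ℂ)) = (A * B).map (starRingEnd ℂ) := by
  ext i j
  simp [Matrix.mul_apply, Matrix.map_apply, map_sum]

lemma posSemidef_map_star {A : Matrix n n ℂ} (hA : A.PosSemidef) :
    (A.map (starRingEnd ℂ)).PosSemidef := by
  have h : A.map (starRingEnd ℂ) = Aᵀ := by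
    ext i j
    have := congrFun (congrFun hA.1 i) j
    simp only [conjTranspose_apply] at this
    simp [Matrix.map_apply, Matrix.transpose_apply, ← this]
  rw [h]
  exact hA.transpose

lemma posSemidef_kron {A : Matrix n n ℂ} {B : Matrix m m ℂ}
    (hA : A.PosSemidef) (hB : B.PosSemidef) : (A ⊗ₖ B).PosSemidef := by
  exact hA.kronecker hB

lemma trace_map_star (A : Matrix n n ℂ) :
    (A.map (starRingEnd ℂ)).trace = star A.trace := by
  simp [Matrix.trace, Matrix.diag, Matrix.map_apply, map_sum]

lemma trace_eq_sum_eig {A : Matrix n n ℂ} (hA : A.IsHermitian) :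
    A.trace = ((∑ i, hA.eigenvalues i : ℝ) : ℂ) := by
  have hU : star (IsHermitian.eigenvectorUnitary hA : Matrix n n ℂ) *
      (IsHermitian.eigenvectorUnitary hA : Matrix n n ℂ) = 1 :=
    Matrix.mem_unitaryGroup_iff'.mp (IsHermitian.eigenvectorUnitary hA).2
  conv_lhs => rw [hA.spectral_theorem, Unitary.conjStarAlgAut_apply]
  rw [Matrix.trace_mul_cycle, hU, Matrix.one_mul, Matrix.trace_diagonal]
  push_cast
  rfl

lemma trace_sq_eq_sum_eig {A : Matrix n n ℂ} (hA : A.IsHermitian) :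
    (A * A).trace = ((∑ i, hA.eigenvalues i ^ 2 : ℝ) : ℂ) := by
  have hU : star (IsHermitian.eigenvectorUnitary hA : Matrix n n ℂ) *
      (IsHermitian.eigenvectorUnitary hA : Matrix n n ℂ) = 1 :=
    Matrix.mem_unitaryGroup_iff'.mp (IsHermitian.eigenvectorUnitary hA).2
  have h2 : ∀ X : Matrix n n ℂ, star (IsHermitian.eigenvectorUnitary hA : Matrix n n ℂ) *
      ((IsHermitian.eigenvectorUnitary hA : Matrix n n ℂ) * X) = X := fun X => by
    rw [← Matrix.mul_assoc, hU, Matrix.one_mul]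
  have key : A * A = (IsHermitian.eigenvectorUnitary hA : Matrix n n ℂ) *
      (diagonal (RCLike.ofReal ∘ hA.eigenvalues) * diagonal (RCLike.ofReal ∘ hA.eigenvalues)) *
      star (IsHermitian.eigenvectorUnitary hA : Matrix n n ℂ) := by
    conv_lhs => rw [hA.spectral_theorem, Unitary.conjStarAlgAut_apply]
    simp only [Matrix.mul_assoc]
    rw [h2]
  rw [key, Matrix.trace_mul_cycle, hU, Matrix.one_mul,
    Matrix.diagonal_mul_diagonal, Matrix.trace_diagonal]
  push_cast
  simp [sq]

lemma exists_factor_of_rank_le_one {p q : ℕ} (A : Matrix (Fin p) (Fin q) ℂ)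
    (h : A.rank ≤ 1) : ∃ (a : Fin p → ℂ) (b : Fin q → ℂ), ∀ i j, A i j = a i * b j := by
  have h' : Module.finrank ℂ (LinearMap.range A.mulVecLin) ≤ 1 := h
  rw [Submodule.finrank_le_one_iff_isPrincipal] at h'
  obtain ⟨v, hv⟩ := h'
  have hcol : ∀ j, (fun i => A i j) ∈ LinearMap.range A.mulVecLin := by
    intro j
    refine ⟨Pi.single j 1, ?_⟩
    ext i
    simp [Matrix.mulVecLin_apply, Matrix.mulVec_single]
  rw [hv] at hcol
  choose b hb using fun j => Submodule.mem_span_singleton.mp (hcol j)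
  refine ⟨v, b, fun i j => ?_⟩
  have := congrFun (hb j) i
  simp only [Pi.smul_apply, smul_eq_mul] at this
  rw [← this, mul_comm]

end RealignAux

theorem traceNorm_realign_pure_ge_one_iff_separable
    (NA NB : ℕ) (hNA : 2 ≤ NA) (hNB : 2 ≤ NB)
    (ψ : Matrix (Fin NA) (Fin NB) ℂ) (hψ : hsNorm ψ = 1)
    (ρψ : Matrix (Fin NA × Fin NB) (Fin NA × Fin NB) ℂ)
    (hρψ : ∀ m μ n ν, ρψ (m, μ) (n, ν) = ψ m μ * (starRingEnd ℂ) (ψ n ν)) :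
    1 ≤ traceNorm (realign ρψ) ∧
      (traceNorm (realign ρψ) = 1 ↔
        ∃ (a : Fin NA → ℂ) (b : Fin NB → ℂ), ∀ m μ, ψ m μ = a m * b μ) := by
  classical
  have hT : (ψᴴ * ψ).PosSemidef := posSemidef_conjTranspose_mul_self ψ
  have key : (realign ρψ)ᴴ * realign ρψ = (ψᴴ * ψ) ⊗ₖ (ψᴴ * ψ).map (starRingEnd ℂ) := by
    ext ⟨μ, ν⟩ ⟨μ', ν'⟩
    simp only [Matrix.mul_apply, Matrix.conjTranspose_apply, Matrix.kroneckerMap_apply,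
      Matrix.map_apply, realign, hρψ, map_sum,
      Fintype.sum_prod_type, Finset.sum_mul_sum, star_mul']
    refine Finset.sum_congr rfl fun m _ => Finset.sum_congr rfl fun n _ => by
      simp only [_root_.map_mul, starRingEnd_apply, star_star, star_mul']
      ring
  -- square root of the realigned Gram matrix
  have hS : (hT.sqrt).PosSemidef := hT.posSemidef_sqrt
  have hS' : ((hT.sqrt).map (starRingEnd ℂ)).PosSemidef := RealignAux.posSemidef_map_star hS
  have hKron := RealignAux.posSemidef_kron hS hS'
  have hsq : (hT.sqrt ⊗ₖ (hT.sqrt).map (starRingEnd ℂ)) ^ 2 = (realign ρψ)ᴴ * realign ρψ := by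
    rw [sq, ← Matrix.mul_kronecker_mul, RealignAux.map_star_mul, hT.sqrt_mul_self, key]
  have hsqrt := hKron.eq_sqrt_of_sq_eq (posSemidef_conjTranspose_mul_self (realign ρψ)) hsq
  set f : Fin NB → ℝ := hS.1.eigenvalues with hfdef
  have hf0 : ∀ i, 0 ≤ f i := fun i => hS.eigenvalues_nonneg i
  have htrace : traceNorm (realign ρψ) = (∑ i, f i) ^ 2 := by
    rw [show traceNorm (realign ρψ) =
        (posSemidef_conjTranspose_mul_self (realign ρψ)).sqrt.trace.re from rfl, ← hsqrt, Matrix.trace_kronecker, RealignAux.trace_map_star,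
      RealignAux.trace_eq_sum_eig hS.1]
    simp only [RCLike.star_def, Complex.conj_ofReal, ← Complex.ofReal_mul, Complex.ofReal_re, sq]
    rfl
  -- the HS norm condition
  have hψ2 : ∑ m, ∑ μ, ‖ψ m μ‖ ^ 2 = 1 := by
    rw [hsNorm, Real.sqrt_eq_one] at hψ
    exact hψ
  have hzss : ∀ z : ℂ, star z * z = ((‖z‖ ^ 2 : ℝ) : ℂ) := fun z => by
    rw [mul_comm, RCLike.star_def, Complex.mul_conj, Complex.normSq_eq_norm_sq]
  have hsum_sq : ∑ i, f i ^ 2 = 1 := by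
    have h1 : (ψᴴ * ψ).trace = ((∑ i, f i ^ 2 : ℝ) : ℂ) := by
      conv_lhs => rw [← hT.sqrt_mul_self]
      rw [RealignAux.trace_sq_eq_sum_eig hS.1]
    have h2 : (ψᴴ * ψ).trace = 1 := by
      have e : (ψᴴ * ψ).trace = ((∑ μ, ∑ m, ‖ψ m μ‖ ^ 2 : ℝ) : ℂ) := by
        simp only [Matrix.trace, Matrix.diag, Matrix.mul_apply, Matrix.conjTranspose_apply, hzss]
        push_cast
        rfl
      rw [e, Finset.sum_comm, hψ2, Complex.ofReal_one]
    rw [h2] at h1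
    exact_mod_cast h1.symm
  have hge : 1 ≤ traceNorm (realign ρψ) := by
    rw [htrace, ← hsum_sq]
    exact Finset.sum_sq_le_sq_sum_of_nonneg fun i _ => hf0 i
  refine ⟨hge, ?_, ?_⟩
  · -- forward direction
    intro heq
    have hfs : (∑ i, f i) ^ 2 = 1 := by rw [← htrace]; exact heq
    have hcross : ∑ i, ∑ j ∈ Finset.univ.erase i, f i * f j = 0 := by
      have e1 : (∑ i, f i) ^ 2 = ∑ i, ∑ j, f i * f j := by
        rw [sq, Finset.sum_mul_sum]
      have e2 : ∀ i : Fin NB, ∑ j, f i * f j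
          = f i ^ 2 + ∑ j ∈ Finset.univ.erase i, f i * f j := fun i => by
        rw [← Finset.add_sum_erase _ _ (Finset.mem_univ i), sq]
      rw [e1] at hfs
      simp_rw [e2] at hfs
      rw [Finset.sum_add_distrib, hsum_sq] at hfs
      linarith
    have hpair : ∀ i j : Fin NB, i ≠ j → f i * f j = 0 := by
      intro i j hij
      have houter := (Finset.sum_eq_zero_iff_of_nonneg (fun i _ =>
        Finset.sum_nonneg fun j _ => mul_nonneg (hf0 _) (hf0 _))).mp hcross i (Finset.mem_univ i)
      exact (Finset.sum_eq_zero_iff_of_nonneg (fun j _ =>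
        mul_nonneg (hf0 _) (hf0 _))).mp houter j
        (Finset.mem_erase.mpr ⟨hij.symm, Finset.mem_univ j⟩)
    have hrank : ψ.rank ≤ 1 := by
      have h1 : ψ.rank = (ψᴴ * ψ).rank := (Matrix.rank_conjTranspose_mul_self ψ).symm
      have h2 : (ψᴴ * ψ).rank ≤ (hT.sqrt).rank := by
        conv_lhs => rw [← hT.sqrt_mul_self]
        exact Matrix.rank_mul_le_left _ _
      have h3 : (hT.sqrt).rank ≤ 1 := by
        rw [hS.1.rank_eq_card_non_zero_eigs]
        refine Fintype.card_le_one_iff.mpr fun x y => Subtype.ext ?_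
        by_contra hxy
        rcases mul_eq_zero.mp (hpair x.1 y.1 hxy) with h' | h'
        · exact x.2 h'
        · exact y.2 h'
      omega
    obtain ⟨a, b, hab⟩ := RealignAux.exists_factor_of_rank_le_one ψ hrank
    exact ⟨a, b, hab⟩
  · -- backward direction
    rintro ⟨a, b, hab⟩
    set sa : ℝ := ∑ m, ‖a m‖ ^ 2 with hsadef
    set sb : ℝ := ∑ μ, ‖b μ‖ ^ 2 with hsbdef
    have hsa0 : 0 ≤ sa := Finset.sum_nonneg fun _ _ => by positivity
    have hsb0 : 0 ≤ sb := Finset.sum_nonneg fun _ _ => by positivity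
    have hsab : sa * sb = 1 := by
      rw [← hψ2, hsadef, hsbdef, Finset.sum_mul_sum]
      refine Finset.sum_congr rfl fun m _ => Finset.sum_congr rfl fun μ _ => ?_
      rw [hab, norm_mul, mul_pow]
    set i0 : Fin NB := ⟨0, by omega⟩ with hi0def
    set C : Matrix (Fin NB) (Fin NB) ℂ :=
      Matrix.of fun ρ ν => (if ρ = i0 then ((Real.sqrt sa : ℝ) : ℂ) else 0) * b ν with hCdef
    have hS0 := posSemidef_conjTranspose_mul_self C
    have hterm : ∀ μ ν ρ : Fin NB, star (C ρ μ) * C ρ ν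
        = if ρ = i0 then ((sa : ℝ) : ℂ) * (star (b μ) * b ν) else 0 := by
      intro μ ν ρ
      by_cases h : ρ = i0
      · subst h
        have hstar : star ((Real.sqrt sa : ℝ) : ℂ) = ((Real.sqrt sa : ℝ) : ℂ) :=
          Complex.conj_ofReal _
        simp only [hCdef, Matrix.of_apply, eq_self_iff_true, if_true, star_mul', hstar]
        have hss : ((Real.sqrt sa : ℝ) : ℂ) * ((Real.sqrt sa : ℝ) : ℂ) = ((sa : ℝ) : ℂ) := by
          rw [← Complex.ofReal_mul, Real.mul_self_sqrt hsa0]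
        linear_combination (star (b μ) * b ν) * hss
      · simp [hCdef, h]
    have hC : ∀ μ ν, (Cᴴ * C) μ ν = ((sa : ℝ) : ℂ) * (star (b μ) * b ν) := by
      intro μ ν
      rw [Matrix.mul_apply]
      simp_rw [Matrix.conjTranspose_apply]
      rw [Finset.sum_congr rfl fun ρ _ => hterm μ ν ρ, Finset.sum_ite_eq' Finset.univ i0]
      simp
    have hbb : ∑ ν, star (b ν) * b ν = ((sb : ℝ) : ℂ) := by
      simp_rw [hzss]
      rw [hsbdef]
      push_cast
      rfl
    have hsq0 : (Cᴴ * C) ^ 2 = ψᴴ * ψ := by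
      ext μ ν
      rw [sq]
      rw [Matrix.mul_apply]
      simp_rw [hC]
      have hL : ∀ ρ, (((sa : ℝ) : ℂ) * (star (b μ) * b ρ)) * (((sa : ℝ) : ℂ) * (star (b ρ) * b ν))
          = (((sa : ℝ) : ℂ) * ((sa : ℝ) : ℂ) * (star (b μ) * b ν)) * (star (b ρ) * b ρ) :=
        fun ρ => by ring
      rw [Finset.sum_congr rfl fun ρ _ => hL ρ, ← Finset.mul_sum, hbb]
      rw [Matrix.mul_apply]
      simp_rw [Matrix.conjTranspose_apply, hab, star_mul']
      have hR : ∀ m, (star (a m) * star (b μ)) * (a m * b ν)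
          = (star (b μ) * b ν) * (star (a m) * a m) := fun m => by ring
      rw [Finset.sum_congr rfl fun m _ => hR m, ← Finset.mul_sum]
      have haa : ∑ m, star (a m) * a m = ((sa : ℝ) : ℂ) := by
        simp_rw [hzss]
        rw [hsadef]
        push_cast
        rfl
      rw [haa]
      have hcc : ((sa : ℝ) : ℂ) * ((sa : ℝ) : ℂ) * ((sb : ℝ) : ℂ) = ((sa : ℝ) : ℂ) := by
        push_cast
        rw [← Complex.ofReal_mul, ← Complex.ofReal_mul]
        rw [mul_assoc, hsab, mul_one]
      linear_combination (star (b μ) * b ν) * hcc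
    have hsqrt0 : Cᴴ * C = hT.sqrt := hS0.eq_sqrt_of_sq_eq hT hsq0
    have htrC : (hT.sqrt).trace = 1 := by
      rw [← hsqrt0, Matrix.trace]
      simp_rw [Matrix.diag, hC]
      rw [← Finset.mul_sum, hbb, ← Complex.ofReal_mul, hsab, Complex.ofReal_one]
    have hf1 : ∑ i, f i = 1 := by
      have h := RealignAux.trace_eq_sum_eig hS.1
      rw [htrC] at h
      exact_mod_cast h.symm
    rw [htrace, hf1]
    norm_num
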